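/- Let a ∈ C([0,1]) be weakly degenerate with degeneracy point x₀ ∈ [0,1]. Then there exists a constant C > 0 such that for every u ∈ H²_a(0,1) one has ‖u'‖²_{L²(0,1)} ≤ C (‖u‖²_{L²(0,1)} + ‖√a·u''‖²_{L²(0,1)}). Consequently, the norms ‖u‖²_{H²_a(0,1)} = ‖u‖²_{L²(0,1)} + ‖u'‖²_{L²(0,1)} + ‖√a·u''‖²_{L²(0,1)} and ‖u‖²_{2,a} = ‖u‖²_{L²(0,1)} + ‖√a·u''‖²_{L²(0,1)} are equivalent on H²_a(0,1). -/

import Mathlib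

open MeasureTheory Set Filter

/-- `f` is absolutely continuous on `[c,d]` with (a.e.) derivative `g`,
expressed via the fundamental theorem of calculus. -/
def ACOn (c d : ℝ) (f g : ℝ → ℝ) : Prop :=
  MeasureTheory.IntegrableOn g (Set.Icc c d) ∧
    ∀ x ∈ Set.Icc c d, f x = f c + ∫ t in c..x, g t

/-- `f` is locally absolutely continuous on `[0,1] \ {x₀}` with derivative `g`. -/
def LocACOn (x₀ : ℝ) (f g : ℝ → ℝ) : Prop :=
  ∀ c d : ℝ, 0 ≤ c → d ≤ 1 → c ≤ d → x₀ ∉ Set.Icc c d → ACOn c d f g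

/-- `a` is weakly degenerate with degeneracy point `x₀`. -/
def WeaklyDeg (a : ℝ → ℝ) (x₀ : ℝ) : Prop :=
  ContinuousOn a (Set.Icc 0 1) ∧ x₀ ∈ Set.Icc (0:ℝ) 1 ∧ a x₀ = 0 ∧
    (∀ x ∈ Set.Icc (0:ℝ) 1, x ≠ x₀ → 0 < a x) ∧
    MeasureTheory.IntegrableOn (fun x => 1 / a x) (Set.Ioo 0 1)

/-- `a` is strongly degenerate with degeneracy point `x₀`. -/
def StronglyDeg (a : ℝ → ℝ) (x₀ : ℝ) : Prop :=
  ContinuousOn a (Set.Icc 0 1) ∧ x₀ ∈ Set.Icc (0:ℝ) 1 ∧ a x₀ = 0 ∧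
    (∀ x ∈ Set.Icc (0:ℝ) 1, x ≠ x₀ → 0 < a x) ∧
    ¬ MeasureTheory.IntegrableOn (fun x => 1 / a x) (Set.Ioo 0 1)

/-- Hypothesis (H): there is `K ∈ [1,2)` such that `x ↦ |x-x₀|^K / a x` is
non-increasing on `[0,x₀)` and non-decreasing on `(x₀,1]`. -/
def HypH (a : ℝ → ℝ) (x₀ : ℝ) : Prop :=
  ∃ K : ℝ, 1 ≤ K ∧ K < 2 ∧
    AntitoneOn (fun x => |x - x₀| ^ K / a x) (Set.Ico 0 x₀) ∧
    MonotoneOn (fun x => |x - x₀| ^ K / a x) (Set.Ioc x₀ 1)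

/-- The squared `L²(0,1)` norm. -/
noncomputable def sqL2 (f : ℝ → ℝ) : ℝ := ∫ x in Set.Ioo (0:ℝ) 1, (f x) ^ 2

/-- Cauchy–Schwarz inequality for integrals of nonnegative functions. -/
lemma cs_aux {α : Type*} [MeasurableSpace α] {μ : Measure α} {f g : α → ℝ}
    (hf0 : ∀ᵐ x ∂μ, 0 ≤ f x) (hg0 : ∀ᵐ x ∂μ, 0 ≤ g x)
    (hf2 : Integrable (fun x => f x ^ 2) μ) (hg2 : Integrable (fun x => g x ^ 2) μ)
    (hfg : Integrable (fun x => f x * g x) μ) :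
    (∫ x, f x * g x ∂μ) ^ 2 ≤ (∫ x, f x ^ 2 ∂μ) * (∫ x, g x ^ 2 ∂μ) := by
  set F := ∫ x, f x ^ 2 ∂μ with hF
  set G := ∫ x, g x ^ 2 ∂μ with hG
  set P := ∫ x, f x * g x ∂μ with hP
  have hFnn : 0 ≤ F := integral_nonneg fun x => sq_nonneg _
  have hGnn : 0 ≤ G := integral_nonneg fun x => sq_nonneg _
  have hPnn : 0 ≤ P := by
    refine integral_nonneg_of_ae ?_
    filter_upwards [hf0, hg0] with x h1 h2 using mul_nonneg h1 h2
  have expand : ∀ t : ℝ, 0 ≤ t ^ 2 * F - 2 * t * P + G := by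
    intro t
    have h0 : 0 ≤ ∫ x, (t * f x - g x) ^ 2 ∂μ := integral_nonneg fun x => sq_nonneg _
    have heq : ∫ x, (t * f x - g x) ^ 2 ∂μ = t ^ 2 * F - 2 * t * P + G := by
      have h1 : (fun x => (t * f x - g x) ^ 2)
          = fun x => (t ^ 2 * f x ^ 2 - (2 * t) * (f x * g x)) + g x ^ 2 := by
        funext x; ring
      have e1 : Integrable (fun x => t ^ 2 * f x ^ 2 - 2 * t * (f x * g x)) μ :=
        (hf2.const_mul (t ^ 2)).sub (hfg.const_mul (2 * t))
      have e2 : Integrable (fun x => t ^ 2 * f x ^ 2) μ := hf2.const_mul (t ^ 2)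
      have e3 : Integrable (fun x => 2 * t * (f x * g x)) μ := hfg.const_mul (2 * t)
      rw [h1]
      rw [integral_add e1 hg2, integral_sub e2 e3, MeasureTheory.integral_const_mul,
        MeasureTheory.integral_const_mul]
    linarith [heq ▸ h0]
  by_cases hF0 : F = 0
  · have hP0 : P = 0 := by
      by_contra hne
      have hPpos : 0 < P := lt_of_le_of_ne hPnn (Ne.symm hne)
      have := expand ((G + 1) / (2 * P))
      rw [hF0] at this
      have h2 : 2 * ((G + 1) / (2 * P)) * P = G + 1 := by
        field_simp
      nlinarith
    rw [hP0, hF0]; nlinarith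
  · have hFpos : 0 < F := lt_of_le_of_ne hFnn (Ne.symm hF0)
    have h := expand (P / F)
    have h2 : (P / F) ^ 2 * F = P ^ 2 / F := by field_simp
    have h3 : 2 * (P / F) * P = 2 * (P ^ 2 / F) := by field_simp
    rw [h2, h3] at h
    have : P ^ 2 / F ≤ G := by linarith
    calc P ^ 2 = (P ^ 2 / F) * F := by field_simp
    _ ≤ G * F := mul_le_mul_of_nonneg_right this hFnn
    _ = F * G := mul_comm _ _

lemma sq_bound {p q j i ab : ℝ} (hp : p ^ 2 ≤ 4 * i) (hq : q ^ 2 ≤ 4 * i)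
    (hj : j ^ 2 ≤ ab) (hj0 : 0 ≤ j) (hp0 : 0 ≤ p) (hq0 : 0 ≤ q) :
    (2 * p + 2 * q + j) ^ 2 ≤ 96 * i + 3 * ab := by
  nlinarith [sq_nonneg (p - q), sq_nonneg (2 * p - j), sq_nonneg (2 * q - j)]

lemma abs_int_le {α : Type*} [MeasurableSpace α] {μ : Measure α} (f : α → ℝ) :
    |∫ x, f x ∂μ| ≤ ∫ x, |f x| ∂μ := by
  simpa [Real.norm_eq_abs] using MeasureTheory.norm_integral_le_integral_norm (μ := μ) f

set_option maxHeartbeats 1000000 in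
/-- for a weakly degenerate `a`, on `H²_a(0,1)` we have
`‖u'‖² ≤ C(‖u‖² + ‖√a u''‖²)`, hence the norms `‖·‖_{H²_a}` and `‖·‖_{2,a}` are equivalent. -/
theorem statement0 (a : ℝ → ℝ) (x₀ : ℝ) (ha : WeaklyDeg a x₀) :
    ∃ C > 0, ∀ u u' u'' : ℝ → ℝ,
      -- u ∈ H¹(0,1) with u' absolutely continuous on [0,1] (so u ∈ H²_a(0,1))
      ACOn 0 1 u u' →
      MeasureTheory.IntegrableOn (fun x => (u' x) ^ 2) (Set.Ioo 0 1) →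
      ACOn 0 1 u' u'' →
      -- √a·u'' ∈ L²(0,1)
      MeasureTheory.IntegrableOn (fun x => a x * (u'' x) ^ 2) (Set.Ioo 0 1) →
      -- the main estimate
      (sqL2 u' ≤ C * (sqL2 u + ∫ x in Set.Ioo (0:ℝ) 1, a x * (u'' x) ^ 2)) ∧
      -- consequently the two (squared) norms are equivalent
      (sqL2 u + ∫ x in Set.Ioo (0:ℝ) 1, a x * (u'' x) ^ 2 ≤
        sqL2 u + sqL2 u' + ∫ x in Set.Ioo (0:ℝ) 1, a x * (u'' x) ^ 2) ∧
      (sqL2 u + sqL2 u' + ∫ x in Set.Ioo (0:ℝ) 1, a x * (u'' x) ^ 2 ≤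
        (1 + C) * (sqL2 u + ∫ x in Set.Ioo (0:ℝ) 1, a x * (u'' x) ^ 2)) := by
  obtain ⟨hacont, hx₀mem, hax₀, hapos, hainteg⟩ := ha
  set A : ℝ := ∫ x in Set.Ioo (0:ℝ) 1, 1 / a x with hAdef
  -- pointwise nonnegativity facts
  have h1a : ∀ x ∈ Set.Ioo (0:ℝ) 1, 0 ≤ 1 / a x := by
    intro x hx
    by_cases hxx : x = x₀
    · rw [hxx, hax₀]; simp
    · exact le_of_lt (one_div_pos.2 (hapos x ⟨hx.1.le, hx.2.le⟩ hxx))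
  have h2a : ∀ x ∈ Set.Ioo (0:ℝ) 1, 0 ≤ a x := by
    intro x hx
    by_cases hxx : x = x₀
    · rw [hxx, hax₀]
    · exact le_of_lt (hapos x ⟨hx.1.le, hx.2.le⟩ hxx)
  have hA0 : 0 ≤ A := setIntegral_nonneg measurableSet_Ioo h1a
  refine ⟨3 * A + 96, by linarith, ?_⟩
  intro u u' u'' hu hu'2 hu' hB2
  set I : ℝ := sqL2 u with hIdef
  set B : ℝ := ∫ x in Set.Ioo (0:ℝ) 1, a x * (u'' x) ^ 2 with hBdef
  have hI0 : 0 ≤ I := setIntegral_nonneg measurableSet_Ioo fun x _ => sq_nonneg _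
  have hB0 : 0 ≤ B := setIntegral_nonneg measurableSet_Ioo fun x hx =>
    mul_nonneg (h2a x hx) (sq_nonneg _)
  have hU'0 : 0 ≤ sqL2 u' := setIntegral_nonneg measurableSet_Ioo fun x _ => sq_nonneg _
  -- the key estimate
  have key : sqL2 u' ≤ (3 * A + 96) * (I + B) := by
    -- integrability of u' and u''
    have hu'int : IntegrableOn u' (Set.Icc 0 1) := hu.1
    have hu''int : IntegrableOn u'' (Set.Icc 0 1) := hu'.1
    -- continuity of u
    have huicc : Set.uIcc (0:ℝ) 1 = Set.Icc 0 1 := uIcc_of_le (by norm_num)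
    have hprim : ContinuousOn (fun x => ∫ t in (0:ℝ)..x, u' t) (Set.Icc 0 1) := by
      have := intervalIntegral.continuousOn_primitive_interval
        (a := (0:ℝ)) (b := 1) (f := u') (μ := volume) (by rw [huicc]; exact hu'int)
      rwa [huicc] at this
    have hucont : ContinuousOn u (Set.Icc 0 1) :=
      (continuousOn_const.add hprim).congr fun x hx => hu.2 x hx
    have hu2int : IntegrableOn (fun x => u x ^ 2) (Set.Ioo 0 1) :=
      ((hucont.pow 2).integrableOn_Icc).mono_set Set.Ioo_subset_Icc_self
    -- choose c and d
    obtain ⟨c, hcmem, hcmin⟩ := IsCompact.exists_isMinOn (isCompact_Icc (a := (0:ℝ)) (b := 1/4))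
      ⟨0, by constructor <;> norm_num⟩
      ((hucont.mono (Set.Icc_subset_Icc le_rfl (by norm_num))).pow 2)
    obtain ⟨d, hdmem, hdmin⟩ := IsCompact.exists_isMinOn (isCompact_Icc (a := (3/4:ℝ)) (b := 1))
      ⟨1, by constructor <;> norm_num⟩
      ((hucont.mono (Set.Icc_subset_Icc (by norm_num) le_rfl)).pow 2)
    have hcmin' := isMinOn_iff.1 hcmin
    have hdmin' := isMinOn_iff.1 hdmin
    have hu2nonneg : 0 ≤ᵐ[volume.restrict (Set.Ioo (0:ℝ) 1)] fun x => u x ^ 2 :=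
      Filter.Eventually.of_forall fun x => sq_nonneg _
    -- u c ^ 2 ≤ 4 I
    have hcsq : u c ^ 2 ≤ 4 * I := by
      have hsub : Set.Ioo (0:ℝ) (1/4) ⊆ Set.Ioo (0:ℝ) 1 := Set.Ioo_subset_Ioo le_rfl (by norm_num)
      have h1 : ∫ _y in Set.Ioo (0:ℝ) (1/4), u c ^ 2 ≤ ∫ y in Set.Ioo (0:ℝ) (1/4), u y ^ 2 := by
        refine setIntegral_mono_on (integrableOn_const ?_) (hu2int.mono_set hsub)
          measurableSet_Ioo fun y hy => hcmin' y ⟨hy.1.le, hy.2.le⟩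
        rw [Real.volume_Ioo]; exact ENNReal.ofReal_ne_top
      have h2 : ∫ y in Set.Ioo (0:ℝ) (1/4), u y ^ 2 ≤ I :=
        setIntegral_mono_set hu2int hu2nonneg (HasSubset.Subset.eventuallyLE hsub)
      rw [setIntegral_const, measureReal_def, Real.volume_Ioo, smul_eq_mul] at h1
      rw [show ((1:ℝ)/4 - 0) = 1/4 by norm_num, ENNReal.toReal_ofReal (by norm_num)] at h1
      linarith
    have hdsq : u d ^ 2 ≤ 4 * I := by
      have hsub : Set.Ioo (3/4:ℝ) 1 ⊆ Set.Ioo (0:ℝ) 1 := Set.Ioo_subset_Ioo (by norm_num) le_rfl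
      have h1 : ∫ _y in Set.Ioo (3/4:ℝ) 1, u d ^ 2 ≤ ∫ y in Set.Ioo (3/4:ℝ) 1, u y ^ 2 := by
        refine setIntegral_mono_on (integrableOn_const ?_) (hu2int.mono_set hsub)
          measurableSet_Ioo fun y hy => hdmin' y ⟨hy.1.le, hy.2.le⟩
        rw [Real.volume_Ioo]; exact ENNReal.ofReal_ne_top
      have h2 : ∫ y in Set.Ioo (3/4:ℝ) 1, u y ^ 2 ≤ I :=
        setIntegral_mono_set hu2int hu2nonneg (HasSubset.Subset.eventuallyLE hsub)
      rw [setIntegral_const, measureReal_def, Real.volume_Ioo, smul_eq_mul] at h1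
      rw [show ((1:ℝ) - 3/4) = 1/4 by norm_num, ENNReal.toReal_ofReal (by norm_num)] at h1
      linarith
    have hc1 : (0:ℝ) ≤ c := hcmem.1
    have hc2 : c ≤ 1/4 := hcmem.2
    have hd1 : (3/4:ℝ) ≤ d := hdmem.1
    have hd2 : d ≤ 1 := hdmem.2
    have hdc : (1/2:ℝ) ≤ d - c := by linarith
    -- J : L¹ norm of u''
    set J : ℝ := ∫ x in Set.Ioo (0:ℝ) 1, |u'' x| with hJdef
    have habsint : IntegrableOn (fun x => |u'' x|) (Set.Ioo (0:ℝ) 1) :=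
      (hu''int.mono_set Set.Ioo_subset_Icc_self).abs
    have hJ0 : 0 ≤ J := setIntegral_nonneg measurableSet_Ioo fun x _ => abs_nonneg _
    -- J² ≤ A * B  via Cauchy–Schwarz
    have hJ2 : J ^ 2 ≤ A * B := by
      set μ := volume.restrict (Set.Ioo (0:ℝ) 1) with hμ
      set f : ℝ → ℝ := fun x => Real.sqrt (1 / a x) with hfdef
      set g : ℝ → ℝ := fun x => Real.sqrt (a x * u'' x ^ 2) with hgdef
      have hmem : ∀ᵐ x ∂μ, x ∈ Set.Ioo (0:ℝ) 1 := ae_restrict_mem measurableSet_Ioo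
      have hne : ∀ᵐ x ∂μ, x ≠ x₀ := by
        refine ae_iff.2 ?_
        have hset : {x : ℝ | ¬ x ≠ x₀} = {x₀} := by ext z; simp
        rw [hset, hμ, Measure.restrict_apply (measurableSet_singleton _)]
        exact measure_mono_null Set.inter_subset_left Real.volume_singleton
      have hf2eq : (fun x => f x ^ 2) =ᵐ[μ] fun x => 1 / a x := by
        filter_upwards [hmem] with x hx using Real.sq_sqrt (h1a x hx)
      have hg2eq : (fun x => g x ^ 2) =ᵐ[μ] fun x => a x * u'' x ^ 2 := by
        filter_upwards [hmem] with x hx using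
          Real.sq_sqrt (mul_nonneg (h2a x hx) (sq_nonneg _))
      have hfgeq : (fun x => f x * g x) =ᵐ[μ] fun x => |u'' x| := by
        filter_upwards [hmem, hne] with x hx hxne
        have hax : a x ≠ 0 := ne_of_gt (hapos x ⟨hx.1.le, hx.2.le⟩ hxne)
        have : f x * g x = Real.sqrt ((1 / a x) * (a x * u'' x ^ 2)) :=
          (Real.sqrt_mul (h1a x hx) _).symm
        rw [this, show (1 / a x) * (a x * u'' x ^ 2) = u'' x ^ 2 by field_simp,
          Real.sqrt_sq_eq_abs]
      have hf2 : Integrable (fun x => f x ^ 2) μ := hainteg.congr hf2eq.symm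
      have hg2 : Integrable (fun x => g x ^ 2) μ := hB2.congr hg2eq.symm
      have hfg : Integrable (fun x => f x * g x) μ := habsint.congr hfgeq.symm
      have hcs := cs_aux (μ := μ) (f := f) (g := g)
        (Filter.Eventually.of_forall fun x => Real.sqrt_nonneg _)
        (Filter.Eventually.of_forall fun x => Real.sqrt_nonneg _) hf2 hg2 hfg
      rw [integral_congr_ae hfgeq, integral_congr_ae hf2eq, integral_congr_ae hg2eq] at hcs
      exact hcs
    -- oscillation bound for u'
    have hosc : ∀ x ∈ Set.Icc (0:ℝ) 1, ∀ y ∈ Set.Icc (0:ℝ) 1, |u' x - u' y| ≤ J := by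
      have hkey : ∀ x ∈ Set.Icc (0:ℝ) 1, ∀ y ∈ Set.Icc (0:ℝ) 1, y ≤ x → |u' x - u' y| ≤ J := by
        intro x hx y hy hyx
        have hii : ∀ z ∈ Set.Icc (0:ℝ) 1, IntervalIntegrable u'' volume 0 z := by
          intro z hz
          exact (hu''int.mono_set (by
            rw [uIcc_of_le hz.1]; exact Set.Icc_subset_Icc le_rfl hz.2)).intervalIntegrable
        have hsubx : u' x - u' y = ∫ t in y..x, u'' t := by
          rw [hu'.2 x hx, hu'.2 y hy]
          have := intervalIntegral.integral_interval_sub_left (hii x hx) (hii y hy)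
          rw [← this]; ring
        rw [hsubx, intervalIntegral.integral_of_le hyx]
        have haesub : (Set.Ioc y x : Set ℝ) ≤ᵐ[volume] Set.Ioo (0:ℝ) 1 := by
          refine MeasureTheory.ae_le_set.2 (measure_mono_null ?_
            (Real.volume_singleton (a := (1:ℝ))))
          intro z hz
          rcases hz with ⟨hz1, hz2⟩
          have hz0 : 0 < z := lt_of_le_of_lt hy.1 hz1.1
          have hz1' : z ≤ 1 := le_trans hz1.2 hx.2
          simp only [Set.mem_Ioo, not_and, not_lt] at hz2
          have := hz2 hz0
          simp [le_antisymm hz1' this]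
        have h3 : ∫ t in Set.Ioc y x, |u'' t| ≤ J :=
          setIntegral_mono_set habsint
            (Filter.Eventually.of_forall fun t => abs_nonneg _) haesub
        calc |∫ t in Set.Ioc y x, u'' t| ≤ ∫ t in Set.Ioc y x, |u'' t| := abs_int_le _
        _ ≤ J := h3
      intro x hx y hy
      rcases le_total y x with h | h
      · exact hkey x hx y hy h
      · rw [abs_sub_comm]; exact hkey y hy x hx h
    -- pointwise bound on u'
    have hpt : ∀ x ∈ Set.Icc (0:ℝ) 1, u' x ^ 2 ≤ 96 * I + 3 * (A * B) := by
      intro x hx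
      have hcI : c ∈ Set.Icc (0:ℝ) 1 := ⟨hc1, by linarith⟩
      have hdI : d ∈ Set.Icc (0:ℝ) 1 := ⟨by linarith, hd2⟩
      have hiu'cd : IntervalIntegrable u' volume c d := by
        refine (hu'int.mono_set ?_).intervalIntegrable
        rw [uIcc_of_le (by linarith : c ≤ d)]; exact Set.Icc_subset_Icc hc1 hd2
      -- FTC for u
      have hfd : u d - u c = ∫ y in c..d, u' y := by
        rw [hu.2 d hdI, hu.2 c hcI]
        have hii : ∀ z ∈ Set.Icc (0:ℝ) 1, IntervalIntegrable u' volume 0 z := by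
          intro z hz
          exact (hu'int.mono_set (by
            rw [uIcc_of_le hz.1]; exact Set.Icc_subset_Icc le_rfl hz.2)).intervalIntegrable
        have := intervalIntegral.integral_interval_sub_left (hii d hdI) (hii c hcI)
        rw [← this]; ring
      -- the averaged difference
      have hsplit : ∫ y in c..d, (u' x - u' y) = (d - c) * u' x - (u d - u c) := by
        rw [intervalIntegral.integral_sub (intervalIntegrable_const) hiu'cd,
          intervalIntegral.integral_const, hfd, smul_eq_mul]
      have hbound : |∫ y in c..d, (u' x - u' y)| ≤ J * (d - c) := by
        have hcd : c ≤ d := by linarith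
        have hiabs : IntegrableOn (fun y => |u' x - u' y|) (Set.Ioc c d) := by
          refine (Integrable.sub (integrable_const _) (hu'int.mono_set ?_)).abs
          exact Set.Icc_subset_Icc hc1 hd2 |>.trans' Set.Ioc_subset_Icc_self
        have h1 : |∫ y in c..d, (u' x - u' y)| ≤ ∫ y in Set.Ioc c d, |u' x - u' y| := by
          rw [intervalIntegral.integral_of_le hcd]
          exact abs_int_le _
        have h2 : ∫ y in Set.Ioc c d, |u' x - u' y| ≤ ∫ _y in Set.Ioc c d, J := by
          refine setIntegral_mono_on hiabs (integrableOn_const ?_)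
            measurableSet_Ioc fun y hy => hosc x hx y ⟨le_trans hc1 hy.1.le, le_trans hy.2 hd2⟩
          rw [Real.volume_Ioc]; exact ENNReal.ofReal_ne_top
        have h3 : ∫ _y in Set.Ioc c d, J = (d - c) * J := by
          rw [setIntegral_const, measureReal_def, Real.volume_Ioc, smul_eq_mul,
            ENNReal.toReal_ofReal (by linarith)]
        calc |∫ y in c..d, (u' x - u' y)| ≤ ∫ y in Set.Ioc c d, |u' x - u' y| := h1
        _ ≤ ∫ _y in Set.Ioc c d, J := h2
        _ = J * (d - c) := by rw [h3]; ring
      have h1 : (d - c) * |u' x| ≤ |u d - u c| + J * (d - c) := by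
        have : (d - c) * u' x = (∫ y in c..d, (u' x - u' y)) + (u d - u c) := by
          rw [hsplit]; ring
        calc (d - c) * |u' x| = |(d - c) * u' x| := by
              rw [abs_mul, abs_of_nonneg (by linarith : (0:ℝ) ≤ d - c)]
        _ = |(∫ y in c..d, (u' x - u' y)) + (u d - u c)| := by rw [this]
        _ ≤ |∫ y in c..d, (u' x - u' y)| + |u d - u c| := abs_add_le _ _
        _ ≤ |u d - u c| + J * (d - c) := by linarith [hbound]
      have h2 : |u d - u c| ≤ |u d| + |u c| := abs_sub _ _
      have h3 : |u' x| ≤ 2 * |u d| + 2 * |u c| + J := by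
        have h0 : (0:ℝ) < d - c := by linarith
        have e3 : |u d| + |u c| ≤ 2 * (d - c) * |u d| + 2 * (d - c) * |u c| := by
          nlinarith [mul_nonneg (by linarith : (0:ℝ) ≤ 2 * (d - c) - 1) (abs_nonneg (u d)),
            mul_nonneg (by linarith : (0:ℝ) ≤ 2 * (d - c) - 1) (abs_nonneg (u c))]
        have e4 : (d - c) * |u' x| ≤ (d - c) * (2 * |u d| + 2 * |u c| + J) := by
          nlinarith
        exact (mul_le_mul_iff_right₀ h0).1 e4
      have hsq : u' x ^ 2 = |u' x| ^ 2 := (sq_abs _).symm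
      have hs2 : u' x ^ 2 ≤ (2 * |u d| + 2 * |u c| + J) ^ 2 := by
        rw [hsq]
        exact pow_le_pow_left₀ (abs_nonneg _) h3 2
      have hfinal := sq_bound (p := |u d|) (q := |u c|) (j := J) (i := I) (ab := A * B)
        (by rw [sq_abs]; exact hdsq) (by rw [sq_abs]; exact hcsq) hJ2 hJ0
        (abs_nonneg _) (abs_nonneg _)
      linarith
    -- integrate the pointwise bound
    have hconst : IntegrableOn (fun _ : ℝ => 96 * I + 3 * (A * B)) (Set.Ioo (0:ℝ) 1) := by
      refine integrableOn_const ?_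
      rw [Real.volume_Ioo]; exact ENNReal.ofReal_ne_top
    have hfin : sqL2 u' ≤ ∫ _x in Set.Ioo (0:ℝ) 1, (96 * I + 3 * (A * B)) := by
      refine setIntegral_mono_on hu'2 hconst measurableSet_Ioo fun x hx =>
        hpt x ⟨hx.1.le, hx.2.le⟩
    rw [setIntegral_const, measureReal_def, Real.volume_Ioo, smul_eq_mul,
      show ((1:ℝ) - 0) = 1 by norm_num, ENNReal.toReal_ofReal (by norm_num), one_mul] at hfin
    linarith [mul_nonneg hA0 hI0, hB0]
  refine ⟨key, by linarith, ?_⟩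
  linarith [key, hI0, hB0]
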